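/- Let A, B be rings, M an (A,B)-bimodule with a distinguished element m₀ ∈ M, and N a (B,A)-bimodule with distinguished element n₀ ∈ N. Suppose there are bimodule maps c : M ⊗_B N → A with c(m₀ ⊗ n₀) = 1_A, and u : B → N ⊗_A M with u(1_B) = n₀ ⊗ m₀, satisfying the zigzag identities (the composite M → M ⊗_B N ⊗_A M → M induced by u and c equals id_M, and similarly for N). Then the map A → M, a ↦ a • m₀, is an isomorphism of left A-modules. -/
import Mathlib


open MulOpposite

universe u

/-- Pointed-bimodule adjunction implies `a ↦ a • m₀` is an isomorphism of left `A`-modules.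

`(M, m₀)` is a pointed `(A,B)`-bimodule and `(N, n₀)` a pointed `(B,A)`-bimodule (right
actions are encoded via `ᵐᵒᵖ`-module structures). The relative tensor products `M ⊗_B N`
and `N ⊗_A M` are encoded as abelian groups `P`, `Q` equipped with balanced biadditive maps
`t`, `s` satisfying the universal property. The counit `c : M ⊗_B N → A` is an
`(A,A)`-bimodule map with `c (m₀ ⊗ n₀) = 1`, and the unit `u : B → N ⊗_A M` is a
`(B,B)`-bimodule map with `u 1 = n₀ ⊗ m₀`. Since `u` is determined by `u 1 = n₀ ⊗ m₀`,
the two zigzag identities read `∀ m, c (m ⊗ n₀) • m₀ = m` and `∀ n, n₀ • c (m₀ ⊗ n) = n`. -/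
theorem pointed_adjunction_unitMap_linearEquiv
    (A B M N : Type u) [Ring A] [Ring B]
    [AddCommGroup M] [Module A M] [Module Bᵐᵒᵖ M] [SMulCommClass A Bᵐᵒᵖ M]
    [AddCommGroup N] [Module B N] [Module Aᵐᵒᵖ N] [SMulCommClass B Aᵐᵒᵖ N]
    (m₀ : M) (n₀ : N)
    -- `P` plays the role of `M ⊗_B N`, an `(A,A)`-bimodule:
    (P : Type u) [AddCommGroup P] [Module A P] [Module Aᵐᵒᵖ P] [SMulCommClass A Aᵐᵒᵖ P]
    (t : M → N → P)
    (ht₁ : ∀ m m' n, t (m + m') n = t m n + t m' n)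
    (ht₂ : ∀ m n n', t m (n + n') = t m n + t m n')
    (htbal : ∀ (m : M) (b : B) (n : N), t (op b • m) n = t m (b • n))
    (htl : ∀ (a : A) m n, t (a • m) n = a • t m n)
    (htr : ∀ m n (a : A), t m (op a • n) = op a • t m n)
    (htuniv : ∀ (T : Type u) [AddCommGroup T] (β : M → N → T),
      (∀ m m' n, β (m + m') n = β m n + β m' n) →
      (∀ m n n', β m (n + n') = β m n + β m n') →
      (∀ (m : M) (b : B) (n : N), β (op b • m) n = β m (b • n)) →
      ∃! h : P →+ T, ∀ m n, h (t m n) = β m n)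
    -- `Q` plays the role of `N ⊗_A M`, a `(B,B)`-bimodule:
    (Q : Type u) [AddCommGroup Q] [Module B Q] [Module Bᵐᵒᵖ Q] [SMulCommClass B Bᵐᵒᵖ Q]
    (s : N → M → Q)
    (hs₁ : ∀ n n' m, s (n + n') m = s n m + s n' m)
    (hs₂ : ∀ n m m', s n (m + m') = s n m + s n m')
    (hsbal : ∀ (n : N) (a : A) (m : M), s (op a • n) m = s n (a • m))
    (hsl : ∀ (b : B) n m, s (b • n) m = b • s n m)
    (hsr : ∀ n m (b : B), s n (op b • m) = op b • s n m)
    (hsuniv : ∀ (T : Type u) [AddCommGroup T] (β : N → M → T),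
      (∀ n n' m, β (n + n') m = β n m + β n' m) →
      (∀ n m m', β n (m + m') = β n m + β n m') →
      (∀ (n : N) (a : A) (m : M), β (op a • n) m = β n (a • m)) →
      ∃! h : Q →+ T, ∀ n m, h (s n m) = β n m)
    -- the counit `c : M ⊗_B N → A`, an `(A,A)`-bimodule map preserving the pointings:
    (c : P →+ A)
    (hcl : ∀ (a : A) (p : P), c (a • p) = a * c p)
    (hcr : ∀ (p : P) (a : A), c (op a • p) = c p * a)
    (hcpt : c (t m₀ n₀) = 1)
    -- the unit `u : B → N ⊗_A M`, a `(B,B)`-bimodule map preserving the pointings: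
    (u : B →+ Q)
    (hul : ∀ b : B, u b = b • u 1)
    (hur : ∀ b : B, u b = op b • u 1)
    (hupt : u 1 = s n₀ m₀)
    -- the zigzag identities:
    (zig₁ : ∀ m : M, c (t m n₀) • m₀ = m)
    (zig₂ : ∀ n : N, op (c (t m₀ n)) • n₀ = n) :
    ∃ e : A ≃ₗ[A] M, ∀ a : A, e a = a • m₀ := by
  refine ⟨{ toFun := fun a => a • m₀
            invFun := fun m => c (t m n₀)
            map_add' := fun a b => add_smul a b m₀
            map_smul' := fun a b => mul_smul a b m₀
            left_inv := fun a => by simp [htl, hcl, hcpt]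
            right_inv := zig₁ }, fun a => rfl⟩
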